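/- Let q = 2^m and γ ∈ F_q. Then f(X) = X + γ·Tr_{F_{q^3}/F_q}(X^{2q+2} + X^{4q+1}) is a permutation of F_{q^3} if and only if γ = 0, or (γ = 1 and m is not divisible by 4). -/

import Mathlib

open Polynomial

lemma char_two_of_card (K : Type*) [Field K] [Fintype K] (k : ℕ) (hk : 0 < k)
    (h : Fintype.card K = 2 ^ k) : CharP K 2 := by
  have hinst : CharP K (ringChar K) := ringChar.charP K
  obtain ⟨n, hp, hcard⟩ := FiniteField.card K (ringChar K)
  have hdvd : ringChar K ∣ 2 ^ k := by
    rw [← h, hcard]; exact dvd_pow_self _ (by exact_mod_cast n.2.ne')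
  have := hp.dvd_of_dvd_pow hdvd
  have h2 : ringChar K = 2 := by
    have := Nat.le_of_dvd (by norm_num) this
    have := hp.two_le
    omega
  rwa [h2] at hinst

lemma four_dvd_of_fifteen_dvd (n : ℕ) (h : 15 ∣ 2 ^ n - 1) : 4 ∣ n := by
  have h1 : 2 ^ n % 15 = 1 := by
    have hpos : 1 ≤ 2 ^ n := Nat.one_le_two_pow
    omega
  have hn : n = 4 * (n / 4) + n % 4 := (Nat.div_add_mod n 4).symm
  have h2 : 2 ^ n % 15 = 2 ^ (n % 4) % 15 := by
    conv_lhs => rw [hn]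
    rw [pow_add, Nat.mul_mod, pow_mul]
    have : (2 ^ 4) ^ (n / 4) % 15 = 1 := by
      rw [Nat.pow_mod]; norm_num
    rw [this, one_mul, Nat.mod_mod]
  have h3 : n % 4 < 4 := Nat.mod_lt _ (by norm_num)
  have h5 : 2 ^ (n % 4) % 15 = 1 := by omega
  have h6 : ∀ r, r < 4 → 2 ^ r % 15 = 1 → r = 0 := by decide
  have := h6 _ h3 h5
  omega

lemma fifteen_dvd_of_four_dvd (n : ℕ) (h : 4 ∣ n) : 15 ∣ 2 ^ n - 1 := by
  obtain ⟨k, rfl⟩ := h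
  have := Nat.sub_dvd_pow_sub_pow 16 1 k
  simpa [pow_mul] using this

open Polynomial

lemma no_root_aux (K : Type*) [Field K] [Fintype K] (k : ℕ) (hk : 0 < k)
    (hcard : Fintype.card K = 2 ^ k) (v : K) (hv : v ^ 4 + v + 1 = 0) : 4 ∣ k := by
  have hchar : CharP K 2 := by
    have hinst : CharP K (ringChar K) := ringChar.charP K
    obtain ⟨n, hp, hc⟩ := FiniteField.card K (ringChar K)
    have hdvd : ringChar K ∣ 2 ^ k := by
      rw [← hcard, hc]; exact dvd_pow_self _ (by exact_mod_cast n.2.ne')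
    have := hp.dvd_of_dvd_pow hdvd
    have h2 : ringChar K = 2 := by
      have := Nat.le_of_dvd (by norm_num) this
      have := hp.two_le
      omega
    rwa [h2] at hinst
  have h2 : (2 : K) = 0 := by
    have := CharP.cast_eq_zero K 2
    exact_mod_cast this
  have hv0 : v ≠ 0 := by
    rintro rfl
    simp at hv
  -- v^16 = v
  have h16 : v ^ 16 = v := by
    linear_combination ((-3)*v + (-3)*v^2 + (-1)*v^3 + v^4 + 2*v^5 + v^6 + (-1)*v^8 + (-1)*v^9 + v^12) * hv + (v + 3*v^2 + 2*v^3) * h2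
  have h15 : v ^ 15 = 1 := by
    have : v ^ 15 * v = 1 * v := by rw [← pow_succ, one_mul]; exact h16
    exact mul_right_cancel₀ hv0 this
  have hdvd15 : orderOf v ∣ 15 := orderOf_dvd_of_pow_eq_one h15
  have hord : orderOf v = 15 := by
    have hle : orderOf v ≤ 15 := Nat.le_of_dvd (by norm_num) hdvd15
    have hcases : orderOf v = 1 ∨ orderOf v = 3 ∨ orderOf v = 5 ∨ orderOf v = 15 := by
      have : ∀ d, d ≤ 15 → d ∣ 15 → d = 1 ∨ d = 3 ∨ d = 5 ∨ d = 15 := by decide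
      exact this _ hle hdvd15
    rcases hcases with h | h | h | h
    · exfalso
      have hv1 : v = 1 := orderOf_eq_one_iff.mp h
      rw [hv1] at hv
      have : (1 : K) = 0 := by linear_combination hv - h2
      exact one_ne_zero this
    · exfalso
      have hv3 : v ^ 3 = 1 := h ▸ pow_orderOf_eq_one v
      have : (1 : K) = 0 := by linear_combination hv - v * hv3 - v * h2
      exact one_ne_zero this
    · exfalso
      have hv5 : v ^ 5 = 1 := h ▸ pow_orderOf_eq_one v
      have : (1 : K) = 0 := by
        linear_combination (1 + v^2 + v^3) * hv + (v + v^2) * hv5 + ((-1)*v^3 + (-1)*v^4 + (-1)*v^6 + (-1)*v^7) * h2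
      exact one_ne_zero this
    · exact h
  have hcd : v ^ (Fintype.card K - 1) = 1 := FiniteField.pow_card_sub_one_eq_one v hv0
  have : orderOf v ∣ Fintype.card K - 1 := orderOf_dvd_of_pow_eq_one hcd
  rw [hord, hcard] at this
  exact four_dvd_of_fifteen_dvd k this

open Polynomial



lemma root_exists (K : Type*) [Field K] [Fintype K] (k : ℕ) (hk : 0 < k)
    (hcard : Fintype.card K = 2 ^ k) (h2 : (2 : K) = 0) (h4 : 4 ∣ k) :
    ∃ v : K, v ^ 4 + v + 1 = 0 := by
  have h2p : (2 : K[X]) = 0 := by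
    have e : (2 : K[X]) = C (1 + 1) := by rw [map_add, C_1]; norm_num
    rw [e, show (1 + 1 : K) = 0 from by rw [← h2]; norm_num, map_zero]
  have hpos : 0 < 2 ^ k := Nat.two_pow_pos k
  have h1 : 1 < 2 ^ k := Nat.one_lt_two_pow (by omega)
  have d1 : (X ^ 4 + X + 1 : K[X]) * (X^11 + X^8 + X^7 + X^5 + X^3 + X^2 + X + 1)
      = X ^ 15 - 1 := by
    linear_combination (1 + X + X^2 + X^3 + X^4 + X^5 + X^6 + X^7 + X^8 + X^9 + X^11 + X^12 : K[X]) * h2p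
  obtain ⟨t, ht⟩ := fifteen_dvd_of_four_dvd k h4
  have d2 : (X ^ 15 - 1 : K[X]) ∣ X ^ (2 ^ k - 1) - 1 := by
    rw [ht, pow_mul]
    simpa using sub_dvd_pow_sub_pow (X ^ 15 : K[X]) 1 t
  have d3 : (X ^ 4 + X + 1 : K[X]) ∣ X ^ (2 ^ k) - X := by
    have e1 : (X ^ (2 ^ k) - X : K[X]) = X * (X ^ (2 ^ k - 1) - 1) := by
      rw [mul_sub, mul_one, ← pow_succ', Nat.sub_add_cancel hpos]
    rw [e1]
    exact Dvd.dvd.mul_left ((Dvd.intro _ d1).trans d2) X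
  have hlhs : (X ^ (2 ^ k) - X : K[X]).natDegree = 2 ^ k := by
    compute_degree!
    all_goals first
      | (rw [if_neg h1.ne]; simp)
      | exact h1.le
  obtain ⟨G, hG⟩ := d3
  by_contra hno
  push_neg at hno
  have hGzero : G = 0 := by
    apply eq_zero_of_natDegree_lt_card_of_eval_eq_zero G Function.injective_id
    · intro v
      have hev : v ^ (2 ^ k) - v = (v ^ 4 + v + 1) * G.eval v := by
        have := congrArg (eval v) hG
        simpa using this
      have hv : v ^ (2 ^ k) = v := by rw [← hcard]; exact FiniteField.pow_card v
      rw [hv, sub_self] at hev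
      exact (mul_eq_zero.mp hev.symm).resolve_left (hno v)
    · have hP : (X ^ 4 + X + 1 : K[X]).natDegree = 4 := by compute_degree!
      have hPne : (X ^ 4 + X + 1 : K[X]) ≠ 0 := by
        intro h
        have := congrArg natDegree h
        rw [hP] at this
        simp at this
      have hGne : G ≠ 0 := by
        rintro rfl
        rw [mul_zero] at hG
        rw [hG] at hlhs
        simp only [natDegree_zero] at hlhs
        omega
      have hmul := natDegree_mul hPne hGne
      rw [← hG, hlhs, hP] at hmul
      rw [hcard]
      have h16 : 16 ≤ 2 ^ k := by
        calc (16:ℕ) = 2 ^ 4 := by norm_num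
        _ ≤ 2 ^ k := Nat.pow_le_pow_right (by norm_num) (Nat.le_of_dvd hk h4)
      omega
  rw [hGzero, mul_zero] at hG
  rw [hG] at hlhs
  simp only [natDegree_zero] at hlhs
  omega

open Polynomial Finset

lemma deg1 (E : Type*) [Field E] (q : ℕ) (hq1 : 1 < q) :
    (X ^ q ^ 2 + X ^ q + X : E[X]).natDegree = q ^ 2 := by
  have h1 : q < q ^ 2 := by nlinarith
  compute_degree!
  all_goals try omega
  all_goals split_ifs <;> first | omega | simp

lemma deg2 (E : Type*) [Field E] (q : ℕ) (hq1 : 1 < q) :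
    (X ^ q - X : E[X]).natDegree = q := by
  compute_degree!
  all_goals try omega
  all_goals split_ifs <;> first | omega | simp

lemma tr_surj (E : Type*) [Field E] [Fintype E] [DecidableEq E] (q : ℕ) (hq1 : 1 < q)
    (hcard : Fintype.card E = q ^ 3)
    (hfrob : ∀ u v : E, (u + v) ^ q = u ^ q + v ^ q)
    (hcube : ∀ u : E, u ^ q ^ 3 = u)
    (t : E) (ht : t ^ q = t) : ∃ X : E, X + X ^ q + X ^ q ^ 2 = t := by
  have hq0 : 0 < q := by omega
  have hqq : 1 < q ^ 2 := by nlinarith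
  set p : E[X] := X ^ q ^ 2 + X ^ q + X with hp
  have hdeg : p.natDegree = q ^ 2 := deg1 E q hq1
  have hdegpos : 0 < p.degree := by
    rw [degree_eq_natDegree, hdeg]
    · exact_mod_cast by positivity
    · intro h
      rw [h] at hdeg
      simp only [natDegree_zero] at hdeg
      nlinarith
  have himg := FiniteField.card_image_polynomial_eval (p := p) hdegpos
  rw [hcard, hdeg] at himg
  set I : Finset E := univ.image fun x => eval x p with hI
  have hIcard : q ≤ I.card := by
    have h3 : q ^ 2 * q ≤ q ^ 2 * I.card := by
      calc q ^ 2 * q = q ^ 3 := by ring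
      _ ≤ q ^ 2 * I.card := himg
    exact Nat.le_of_mul_le_mul_left h3 (by positivity)
  set S : Finset E := univ.filter (fun u => u ^ q = u) with hS
  have heval : ∀ x : E, eval x p = x ^ q ^ 2 + x ^ q + x := by
    intro x; simp [hp]
  have hIS : I ⊆ S := by
    intro u hu
    rw [hI] at hu
    obtain ⟨x, _, rfl⟩ := Finset.mem_image.mp hu
    rw [hS, Finset.mem_filter]
    refine ⟨Finset.mem_univ _, ?_⟩
    have e1 : (x ^ q ^ 2) ^ q = x ^ q ^ 3 := by
      rw [← pow_mul, ← pow_succ]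
    have e2 : (x ^ q) ^ q = x ^ q ^ 2 := by
      rw [← pow_mul, ← pow_two]
    rw [heval, hfrob, hfrob, e1, e2, hcube]
    ring
  have hd2 : (X ^ q - X : E[X]).natDegree = q := deg2 E q hq1
  have hne : (X ^ q - X : E[X]) ≠ 0 := by
    intro h0
    rw [h0] at hd2
    simp only [natDegree_zero] at hd2
    omega
  have hScard : S.card ≤ q := by
    have hroots : S ⊆ (X ^ q - X : E[X]).roots.toFinset := by
      intro u hu
      rw [hS, Finset.mem_filter] at hu
      rw [Multiset.mem_toFinset, mem_roots hne]
      simp [IsRoot.def, sub_eq_zero, hu.2]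
    calc S.card ≤ (X ^ q - X : E[X]).roots.toFinset.card := Finset.card_le_card hroots
    _ ≤ Multiset.card (X ^ q - X : E[X]).roots := Multiset.toFinset_card_le _
    _ ≤ (X ^ q - X : E[X]).natDegree := card_roots' _
    _ = q := hd2
  have hIeqS : I = S := Finset.eq_of_subset_of_card_le hIS (le_trans hScard hIcard)
  have htS : t ∈ S := by rw [hS, Finset.mem_filter]; exact ⟨Finset.mem_univ _, ht⟩
  rw [← hIeqS, hI] at htS
  obtain ⟨x, _, hx⟩ := Finset.mem_image.mp htS
  refine ⟨x, ?_⟩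
  rw [heval] at hx
  rw [← hx]; ring

lemma delta_lemma (E : Type*) [Field E] (q : ℕ) (h2 : (2:E) = 0)
    (hfrob : ∀ u v : E, (u+v)^q = u^q + v^q)
    (hcube : ∀ u : E, u ^ q ^ 3 = u)
    (X a : E) (ha : a ^ q = a) :
    ((X+a)^(2*q+2) + (X+a)^(4*q+1)) + ((X+a)^(2*q+2) + (X+a)^(4*q+1))^q
        + ((X+a)^(2*q+2) + (X+a)^(4*q+1))^(q^2)
    = ((X^(2*q+2) + X^(4*q+1)) + (X^(2*q+2) + X^(4*q+1))^q + (X^(2*q+2) + X^(4*q+1))^(q^2))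
      + (a^4 + a*(X + X^q + X^(q^2))^4 + a^4*(X + X^q + X^(q^2)) + a^5) := by
  have hsq : ∀ u : E, u^(q^2) = (u^q)^q := by
    intro u; rw [pow_two, pow_mul]
  have hcomm : ∀ (u : E) (n : ℕ), (u^n)^q = (u^q)^n := by
    intro u n; rw [← pow_mul, mul_comm, pow_mul]
  obtain ⟨y, hy⟩ : ∃ y, X^q = y := ⟨_, rfl⟩
  obtain ⟨z, hz⟩ : ∃ z, y^q = z := ⟨_, rfl⟩
  have hXc : z^q = X := by
    rw [← hz, ← hy, ← pow_mul, ← pow_mul, show q*(q*q) = q^3 from by ring]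
    exact hcube X
  have hzq : X^(q^2) = z := by rw [hsq, hy, hz]
  have hw1 : (X+a)^q = y + a := by rw [hfrob, ha, hy]
  have hw2 : (y+a)^q = z + a := by rw [hfrob, ha, hz]
  have hw3 : (z+a)^q = X + a := by rw [hfrob, ha, hXc]
  have e240 : 2*q+2 = q*2 + 2 := by ring
  have e41 : 4*q+1 = q*4 + 1 := by ring
  have E1 : (X+a)^(2*q+2) = (y+a)^2 * (X+a)^2 := by
    rw [e240, pow_add, pow_mul, hw1]
  have E2 : (X+a)^(4*q+1) = (y+a)^4 * (X+a) := by
    rw [e41, pow_add, pow_mul, hw1, pow_one]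
  have E1' : X^(2*q+2) = y^2 * X^2 := by
    rw [e240, pow_add, pow_mul, hy]
  have E2' : X^(4*q+1) = y^4 * X := by
    rw [e41, pow_add, pow_mul, hy, pow_one]
  have hUq : ((y+a)^2 * (X+a)^2 + (y+a)^4 * (X+a))^q
      = (z+a)^2 * (y+a)^2 + (z+a)^4 * (y+a) := by
    rw [hfrob, mul_pow, mul_pow, hcomm, hcomm, hcomm, hw1, hw2]
  have hUqq : ((z+a)^2 * (y+a)^2 + (z+a)^4 * (y+a))^q
      = (X+a)^2 * (z+a)^2 + (X+a)^4 * (z+a) := by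
    rw [hfrob, mul_pow, mul_pow, hcomm, hcomm, hcomm, hw2, hw3]
  have hVq : (y^2 * X^2 + y^4 * X)^q = z^2 * y^2 + z^4 * y := by
    rw [hfrob, mul_pow, mul_pow, hcomm, hcomm, hcomm, hy, hz]
  have hVqq : (z^2 * y^2 + z^4 * y)^q = X^2 * z^2 + X^4 * z := by
    rw [hfrob, mul_pow, mul_pow, hcomm, hcomm, hcomm, hz, hXc]
  rw [hzq, E1, E2, E1', E2', hsq, hsq, hUq, hUqq, hVq, hVqq, hy]
  linear_combination (a^4 + a^5 + 2*z*a^3 + 2*z*a^4 + z^2*a^2 + 3*z^2*a^3 + 2*z^3*a^2 + 2*y*a^3 + 2*y*a^4 + 2*y*z*a^2 + 2*y*z*a^3 + y*z^2*a + 3*y*z^2*a^2 + y^2*a^2 + 3*y^2*a^3 + y^2*z*a + (-3)*y^2*z^2*a + 2*y^3*a^2 + (-2)*y^3*z*a + 2*X*a^3 + 2*X*a^4 + 2*X*z*a^2 + 2*X*z*a^3 + X*z^2*a + (-2)*X*z^3*a + 2*X*y*a^2 + 2*X*y*a^3 + (-6)*X*y*z^2*a + X*y^2*a + 3*X*y^2*a^2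 + (-6)*X*y^2*z*a + X^2*a^2 + 3*X^2*a^3 + X^2*z*a + 3*X^2*z*a^2 + (-3)*X^2*z^2*a + X^2*y*a + (-6)*X^2*y*z*a + (-3)*X^2*y^2*a + 2*X^3*a^2 + (-2)*X^3*y*a) * h2

open Polynomial

theorem stmt_16 (m : ℕ) (hm : 0 < m) (q : ℕ) (hq : q = 2 ^ m)
    (F E : Type*) [Field F] [Fintype F] [Field E] [Fintype E] [Algebra F E]
    (hF : Fintype.card F = q) (hE : Fintype.card E = q ^ 3)
    (Tr : E → E) (hTr : ∀ X, Tr X = X + X ^ q + X ^ q ^ 2)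
    (γ : F) :
    Function.Bijective
        (fun X : E => X +
          algebraMap F E γ * Tr (X ^ (2 * q + 2) + X ^ (4 * q + 1))) ↔
      γ = 0 ∨ (γ = 1 ∧ ¬ (4 ∣ m)) := by
  classical
  have hq1 : 1 < q := by rw [hq]; exact Nat.one_lt_two_pow hm.ne'
  have hE3 : Fintype.card E = 2 ^ (3 * m) := by
    rw [hE, hq, ← pow_mul, Nat.mul_comm]
  haveI charE : CharP E 2 := char_two_of_card E (3 * m) (by omega) hE3
  haveI charF : CharP F 2 := char_two_of_card F m hm (by rw [hF, hq])
  haveI : Fact (Nat.Prime 2) := ⟨Nat.prime_two⟩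
  have h2E : (2 : E) = 0 := by
    have := CharP.cast_eq_zero E 2; exact_mod_cast this
  have h2F : (2 : F) = 0 := by
    have := CharP.cast_eq_zero F 2; exact_mod_cast this
  have hfrobE : ∀ u v : E, (u + v) ^ q = u ^ q + v ^ q := by
    intro u v; rw [hq]; exact add_pow_char_pow u v 2 m
  have hcubeE : ∀ u : E, u ^ q ^ 3 = u := by
    intro u; rw [← hE]; exact FiniteField.pow_card u
  have hFq : ∀ c : F, c ^ q = c := by
    intro c; rw [← hF]; exact FiniteField.pow_card c
  have hφq : ∀ c : F, (algebraMap F E c) ^ q = algebraMap F E c := by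
    intro c; rw [← map_pow, hFq]
  have hTrq : ∀ u : E, (u + u ^ q + u ^ q ^ 2) ^ q = u + u ^ q + u ^ q ^ 2 := by
    intro u
    have e1 : (u ^ q) ^ q = u ^ q ^ 2 := by rw [← pow_mul, ← pow_two]
    have e2 : (u ^ q ^ 2) ^ q = u := by
      rw [← pow_mul, show q ^ 2 * q = q ^ 3 from by ring]; exact hcubeE u
    rw [hfrobE, hfrobE, e1, e2]; ring
  have hdelta : ∀ X a : E, a ^ q = a →
      Tr ((X + a) ^ (2 * q + 2) + (X + a) ^ (4 * q + 1))
        = Tr (X ^ (2 * q + 2) + X ^ (4 * q + 1))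
          + (a ^ 4 + a * (Tr X) ^ 4 + a ^ 4 * (Tr X) + a ^ 5) := by
    intro X a ha
    rw [hTr, hTr, hTr]
    exact delta_lemma E q h2E hfrobE hcubeE X a ha
  have hTfix : ∀ Z : E, (Tr (Z ^ (2 * q + 2) + Z ^ (4 * q + 1))) ^ q
      = Tr (Z ^ (2 * q + 2) + Z ^ (4 * q + 1)) := by
    intro Z; rw [hTr]; exact hTrq _
  constructor
  · intro hbij
    by_contra hcon
    push_neg at hcon
    obtain ⟨hγ0, himp⟩ := hcon
    by_cases hγ1 : γ = 1
    · -- γ = 1, 4 ∣ m : construct collision with a = 1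
      obtain ⟨v, hv⟩ := root_exists F m hm (by rw [hF, hq]) h2F (himp hγ1)
      set w := algebraMap F E v with hwdef
      have hw : w ^ 4 + w + 1 = 0 := by
        have := congrArg (algebraMap F E) hv
        simpa [map_add, map_pow, map_one] using this
      have hs : (1 + w) ^ q = 1 + w := by
        rw [hfrobE, one_pow, hwdef, hφq]
      obtain ⟨X, hX⟩ := tr_surj E q hq1 hE hfrobE hcubeE (1 + w) hs
      have hTrX : Tr X = 1 + w := by rw [hTr]; exact hX
      have feq : (X + 1) + algebraMap F E γ * Tr ((X + 1) ^ (2 * q + 2) + (X + 1) ^ (4 * q + 1))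
          = X + algebraMap F E γ * Tr (X ^ (2 * q + 2) + X ^ (4 * q + 1)) := by
        rw [hγ1, map_one, one_mul, one_mul, hdelta X 1 (one_pow q), hTrX]
        linear_combination hw + (2 + 2*w + 3*w^2 + 2*w^3) * h2E
      have := hbij.injective feq
      have h10 : (1 : E) = 0 := by linear_combination this
      exact one_ne_zero h10
    · -- γ ∉ {0, 1}
      have hsq_surj : ∀ d : F, ∃ c : F, c ^ 2 = d := by
        intro d
        have hinj2 : Function.Injective (fun x : F => x ^ 2) := by
          intro x y hxy
          simp only at hxy
          have hx2 : (x - y) ^ 2 = 0 := by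
            linear_combination hxy + (y ^ 2 - x * y) * h2F
          have hx0 : x - y = 0 := pow_eq_zero_iff (n := 2) (by decide : (2:ℕ) ≠ 0) |>.mp hx2
          exact sub_eq_zero.mp hx0
        exact Finite.injective_iff_surjective.mp hinj2 d
      obtain ⟨c2, hc2⟩ := hsq_surj ((1 + γ) * (γ⁻¹) ^ 5)
      obtain ⟨c, hc⟩ := hsq_surj c2
      have hc4 : γ ^ 5 * c ^ 4 = 1 + γ := by
        have e : c ^ 4 = (1 + γ) * (γ⁻¹) ^ 5 := by
          rw [show (4 : ℕ) = 2 * 2 from rfl, pow_mul, hc, hc2]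
        rw [e]
        field_simp
      have hcne : c ≠ 0 := by
        rintro rfl
        rw [zero_pow (by norm_num), mul_zero] at hc4
        have : γ = 1 := by linear_combination -hc4 - h2F
        exact hγ1 this
      set g := algebraMap F E γ with hgdef
      set cE := algebraMap F E c with hcdef
      have hc4E : g ^ 5 * cE ^ 4 = 1 + g := by
        have := congrArg (algebraMap F E) hc4
        simpa [map_mul, map_pow, map_add, map_one] using this
      obtain ⟨X, hX⟩ := tr_surj E q hq1 hE hfrobE hcubeE 1 (one_pow q)
      have hTrX : Tr X = 1 := by rw [hTr]; exact hX
      have ha : (g * cE) ^ q = g * cE := by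
        rw [hgdef, hcdef, ← map_mul, hφq, map_mul]
      have feq : (X + g * cE) + g * Tr ((X + g * cE) ^ (2 * q + 2) + (X + g * cE) ^ (4 * q + 1))
          = X + g * Tr (X ^ (2 * q + 2) + X ^ (4 * q + 1)) := by
        rw [hdelta X (g * cE) ha, hTrX]
        linear_combination (g * cE) * hc4E + (g * cE + g ^ 2 * cE + g ^ 5 * cE ^ 4) * h2E
      have hXX := hbij.injective feq
      have : g * cE = 0 := by linear_combination hXX
      rcases mul_eq_zero.mp this with h | h
      · exact hγ0 (by simpa [hgdef] using h)
      · exact hcne (by simpa [hcdef] using h)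
  · rintro (rfl | ⟨rfl, h4⟩)
    · simp only [map_zero, zero_mul, add_zero]
      exact Function.bijective_id
    · rw [← Finite.injective_iff_bijective]
      intro X Y hXY
      simp only [map_one, one_mul] at hXY
      set TX := Tr (X ^ (2 * q + 2) + X ^ (4 * q + 1)) with hTX
      set TY := Tr (Y ^ (2 * q + 2) + Y ^ (4 * q + 1)) with hTY
      set a := TX + TY with hadef
      have haq : a ^ q = a := by
        rw [hadef, hfrobE, hTX, hTY, hTfix, hTfix]
      have hY : Y = X + a := by
        rw [hadef, hTX, hTY]
        linear_combination -hXY - Tr (Y ^ (2 * q + 2) + Y ^ (4 * q + 1)) * h2E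
      have hTYval : TY = TX + (a ^ 4 + a * (Tr X) ^ 4 + a ^ 4 * (Tr X) + a ^ 5) := by
        rw [hTY, hTX, hY]
        exact hdelta X a haq
      have heq : a = a ^ 4 + a * (Tr X) ^ 4 + a ^ 4 * (Tr X) + a ^ 5 := by
        rw [hadef]
        linear_combination hTYval + TX * h2E
      by_cases ha0 : a = 0
      · rw [hY, ha0, add_zero]
      · exfalso
        have key2 : a * (((Tr X) + 1) ^ 4 + a ^ 3 * ((Tr X) + 1) + a ^ 4) = 0 := by
          linear_combination -heq + (a + 2 * a * (Tr X) + 3 * a * (Tr X) ^ 2 + 2 * a * (Tr X) ^ 3) * h2E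
        have hW : ((Tr X) + 1) ^ 4 + a ^ 3 * ((Tr X) + 1) + a ^ 4 = 0 :=
          (mul_eq_zero.mp key2).resolve_left ha0
        have hvE : (((Tr X) + 1) / a) ^ 4 + (((Tr X) + 1) / a) + 1 = 0 := by
          have e : (((Tr X) + 1) / a) ^ 4 + (((Tr X) + 1) / a) + 1
              = (((Tr X) + 1) ^ 4 + a ^ 3 * ((Tr X) + 1) + a ^ 4) / a ^ 4 := by
            field_simp
          rw [e, hW, zero_div]
        have h4m : 4 ∣ 3 * m := no_root_aux E (3 * m) (by omega) hE3 _ hvE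
        exact h4 (by omega)
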